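/- Let V be a 1-VASS (a VASS of dimension d=1) with configurations s(m) and t(n), m,n∈ℕ. Then s(m)⇝*t(n) in V (monus semantics) if and only if (i) s(m)→*t(n) in V (classical semantics), or (ii) there exist a state q of V and a number m'≥m such that s(m')→*q(0) and q(0)→*t(n) in V (classical semantics). -/

import Mathlib

/-- A transition of a `d`-dimensional VASS over state set `Q`:
a source state, an update vector in `ℤ^d`, and a target state. -/
abbrev VTrans (d : ℕ) (Q : Type*) := Q × (Fin d → ℤ) × Q

/-- A vector addition system with states (VASS), given by its set of transitions. -/
structure VASS (d : ℕ) (Q : Type*) where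
  Δ : Set (VTrans d Q)

variable {d : ℕ} {Q : Type*}

/-- A sequence of transitions is a path if consecutive states match. -/
def IsPath (ρ : List (VTrans d Q)) : Prop := ρ.Chain' (fun t t' => t.2.2 = t'.1)

/-- A path of the VASS `V`. -/
def PathIn (V : VASS d Q) (ρ : List (VTrans d Q)) : Prop :=
  IsPath ρ ∧ ∀ t ∈ ρ, t ∈ V.Δ

/-- The path starts at state `s` (any state works for the empty path). -/
def FromState (s : Q) (ρ : List (VTrans d Q)) : Prop :=
  match ρ with
  | [] => True
  | t :: _ => t.1 = s

/-- The last state of the run induced by `ρ` from state `s`. -/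
def endState (s : Q) (ρ : List (VTrans d Q)) : Q := (ρ.map (fun t => t.2.2)).getLastD s

/-- Cast a vector over `ℕ` to a vector over `ℤ`. -/
def ofNatVec (v : Fin d → ℕ) : Fin d → ℤ := fun j => (v j : ℤ)

/-- The `i`-th vector of the ℤ-run induced by the path `ρ` from initial vector `v`. -/
def zrun (v : Fin d → ℤ) (ρ : List (VTrans d Q)) (i : ℕ) : Fin d → ℤ :=
  v + ((ρ.take i).map (fun t => t.2.1)).sum

/-- The last vector of the ℤ-run induced by `ρ` from `v`. -/
def zend (v : Fin d → ℤ) (ρ : List (VTrans d Q)) : Fin d → ℤ := zrun v ρ ρ.length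

/-- One step of the monus semantics: add `z` and truncate at `0` componentwise. -/
def mstep (v : Fin d → ℕ) (z : Fin d → ℤ) : Fin d → ℕ := fun j => ((v j : ℤ) + z j).toNat

/-- The `i`-th vector of the monus run induced by the path `ρ` from initial vector `v`. -/
def mrun (v : Fin d → ℕ) (ρ : List (VTrans d Q)) (i : ℕ) : Fin d → ℕ :=
  (ρ.take i).foldl (fun u t => mstep u t.2.1) v

/-- The last vector of the monus run induced by `ρ` from `v`. -/
def mend (v : Fin d → ℕ) (ρ : List (VTrans d Q)) : Fin d → ℕ := mrun v ρ ρ.length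

/-- The classical run induced by `ρ` from `v` exists: no value of the ℤ-run
drops below zero in any coordinate. -/
def ClassicalOK (v : Fin d → ℕ) (ρ : List (VTrans d Q)) : Prop :=
  ∀ i ≤ ρ.length, ∀ j, 0 ≤ zrun (ofNatVec v) ρ i j

/-- Classical reachability `s(v) →* t(w)`. -/
def ClassicalReach (V : VASS d Q) (s : Q) (v : Fin d → ℕ) (t : Q) (w : Fin d → ℕ) : Prop :=
  ∃ ρ, PathIn V ρ ∧ FromState s ρ ∧ endState s ρ = t ∧ ClassicalOK v ρ ∧
    zend (ofNatVec v) ρ = ofNatVec w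

/-- Reachability in ℤ-semantics `s(v) →ℤ* t(w)`. -/
def ZReach (V : VASS d Q) (s : Q) (v : Fin d → ℤ) (t : Q) (w : Fin d → ℤ) : Prop :=
  ∃ ρ, PathIn V ρ ∧ FromState s ρ ∧ endState s ρ = t ∧ zend v ρ = w

/-- Reachability in monus semantics `s(v) ⇝* t(w)`. -/
def MonusReach (V : VASS d Q) (s : Q) (v : Fin d → ℕ) (t : Q) (w : Fin d → ℕ) : Prop :=
  ∃ ρ, PathIn V ρ ∧ FromState s ρ ∧ endState s ρ = t ∧ mend v ρ = w

/-- Coordinate `j` hits `0` in the ℤ-run (equivalently, classical run) induced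
by `ρ` from `v` (at some index `1 ≤ i ≤ k`). -/
def HitsZeroZ (v : Fin d → ℤ) (ρ : List (VTrans d Q)) (j : Fin d) : Prop :=
  ∃ i, 1 ≤ i ∧ i ≤ ρ.length ∧ zrun v ρ i j = 0

/-- Coordinate `j` hits `0` in the monus run induced by `ρ` from `v`. -/
def HitsZeroM (v : Fin d → ℕ) (ρ : List (VTrans d Q)) (j : Fin d) : Prop :=
  ∃ i, 1 ≤ i ∧ i ≤ ρ.length ∧ mrun v ρ i j = 0

/-- The monus run induced by `ρ` from `v` is lossy: at some step, for some
coordinate, the actual change differs from the transition's update. -/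
def Lossy (v : Fin d → ℕ) (ρ : List (VTrans d Q)) : Prop :=
  ∃ (i : Fin ρ.length) (j : Fin d),
    (mrun v ρ ((i : ℕ) + 1) j : ℤ) ≠ (mrun v ρ (i : ℕ) j : ℤ) + (ρ.get i).2.1 j

/-- `mi ρ s₀ v₀`: the coordinatewise minimum (with `0`) of all values along
the ℤ-run induced by `ρ` from `v`. -/
def mi (v : Fin d → ℤ) (ρ : List (VTrans d Q)) : Fin d → ℤ :=
  fun j => min 0 ((Finset.range (ρ.length + 1)).inf' Finset.nonempty_range_add_one
    (fun i => zrun v ρ i j))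

/-- The reverse VASS: `(p,z,q)` is a transition iff `(q,-z,p)` is one of `V`. -/
def revV (V : VASS d Q) : VASS d Q := ⟨{tr | (tr.2.2, -tr.2.1, tr.1) ∈ V.Δ}⟩

/-- Coverability in monus semantics. -/
def MonusCover (V : VASS d Q) (s : Q) (v : Fin d → ℕ) (t : Q) (w : Fin d → ℕ) : Prop :=
  ∃ w', w ≤ w' ∧ MonusReach V s v t w'

/-- Coverability in classical semantics. -/
def ClassicalCover (V : VASS d Q) (s : Q) (v : Fin d → ℕ) (t : Q) (w : Fin d → ℕ) : Prop :=
  ∃ w', w ≤ w' ∧ ClassicalReach V s v t w'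


section Aux

variable {d : ℕ} {Q : Type*}

@[simp] lemma zrun_zero (v : Fin d → ℤ) (ρ : List (VTrans d Q)) : zrun v ρ 0 = v := by
  simp [zrun]

@[simp] lemma mrun_zero (v : Fin d → ℕ) (ρ : List (VTrans d Q)) : mrun v ρ 0 = v := by
  simp [mrun]

lemma zrun_succ (v : Fin d → ℤ) (ρ : List (VTrans d Q)) {i : ℕ} (h : i < ρ.length) :
    zrun v ρ (i+1) = zrun v ρ i + (ρ.get ⟨i, h⟩).2.1 := by
  unfold zrun
  rw [List.take_succ, List.getElem?_eq_getElem h, Option.toList_some, List.map_append,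
    List.sum_append]
  simp [add_assoc]

lemma mrun_succ (v : Fin d → ℕ) (ρ : List (VTrans d Q)) {i : ℕ} (h : i < ρ.length) :
    mrun v ρ (i+1) = mstep (mrun v ρ i) (ρ.get ⟨i, h⟩).2.1 := by
  unfold mrun
  rw [List.take_succ, List.getElem?_eq_getElem h, Option.toList_some, List.foldl_append]
  rfl

lemma zrun_of_length_le (v : Fin d → ℤ) (ρ : List (VTrans d Q)) {i : ℕ} (h : ρ.length ≤ i) :
    zrun v ρ i = zrun v ρ ρ.length := by
  simp [zrun, List.take_of_length_le h]

lemma mrun_of_length_le (v : Fin d → ℕ) (ρ : List (VTrans d Q)) {i : ℕ} (h : ρ.length ≤ i) :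
    mrun v ρ i = mrun v ρ ρ.length := by
  simp [mrun, List.take_of_length_le h]

lemma mrun_cast (v : Fin d → ℕ) (ρ : List (VTrans d Q)) {i : ℕ} (h : i < ρ.length) (j : Fin d) :
    (mrun v ρ (i+1) j : ℤ) = max ((mrun v ρ i j : ℤ) + (ρ.get ⟨i, h⟩).2.1 j) 0 := by
  rw [mrun_succ v ρ h]
  simp [mstep, Int.toNat_eq_max]

lemma getLastD_append' {α : Type*} (l1 l2 : List α) (dd : α) :
    (l1 ++ l2).getLastD dd = l2.getLastD (l1.getLastD dd) := by
  rcases List.eq_nil_or_concat l2 with rfl | ⟨l2', b, rfl⟩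
  · simp
  · rw [List.concat_eq_append, ← List.append_assoc, List.getLastD_concat, List.getLastD_concat]

lemma endState_append (s : Q) (ρ₁ ρ₂ : List (VTrans d Q)) :
    endState s (ρ₁ ++ ρ₂) = endState (endState s ρ₁) ρ₂ := by
  unfold endState
  rw [List.map_append, getLastD_append']

@[simp] lemma endState_nil (s : Q) : endState s ([] : List (VTrans d Q)) = s := rfl

lemma zrun_append_le (v : Fin d → ℤ) (ρ₁ ρ₂ : List (VTrans d Q)) {i : ℕ} (h : i ≤ ρ₁.length) :
    zrun v (ρ₁ ++ ρ₂) i = zrun v ρ₁ i := by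
  unfold zrun
  rw [List.take_append_of_le_length h]

lemma mrun_append_le (v : Fin d → ℕ) (ρ₁ ρ₂ : List (VTrans d Q)) {i : ℕ} (h : i ≤ ρ₁.length) :
    mrun v (ρ₁ ++ ρ₂) i = mrun v ρ₁ i := by
  unfold mrun
  rw [List.take_append_of_le_length h]

lemma zrun_append_add (v : Fin d → ℤ) (ρ₁ ρ₂ : List (VTrans d Q)) (i : ℕ) :
    zrun v (ρ₁ ++ ρ₂) (ρ₁.length + i) = zrun (zend v ρ₁) ρ₂ i := by
  unfold zend zrun
  rw [List.take_append, List.map_append, List.sum_append, List.take_length, add_assoc]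
  rw [Nat.add_sub_cancel_left, List.take_of_length_le (Nat.le_add_right _ _)]

lemma mrun_append_add (v : Fin d → ℕ) (ρ₁ ρ₂ : List (VTrans d Q)) (i : ℕ) :
    mrun v (ρ₁ ++ ρ₂) (ρ₁.length + i) = mrun (mend v ρ₁) ρ₂ i := by
  unfold mend mrun
  rw [List.take_append, List.foldl_append, List.take_length]
  rw [Nat.add_sub_cancel_left, List.take_of_length_le (Nat.le_add_right _ _)]

lemma zrun_take (v : Fin d → ℤ) (ρ : List (VTrans d Q)) {i k : ℕ} (h : i ≤ k) :
    zrun v (ρ.take k) i = zrun v ρ i := by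
  unfold zrun
  rw [List.take_take, min_eq_left h]

lemma mrun_take (v : Fin d → ℕ) (ρ : List (VTrans d Q)) {i k : ℕ} (h : i ≤ k) :
    mrun v (ρ.take k) i = mrun v ρ i := by
  unfold mrun
  rw [List.take_take, min_eq_left h]

lemma zrun_add_const (v w : Fin d → ℤ) (ρ : List (VTrans d Q)) (i : ℕ) :
    zrun (v + w) ρ i = zrun v ρ i + w := by
  unfold zrun
  abel

end Aux

section Aux2

variable {d : ℕ} {Q : Type*}

lemma zrun_le_mrun (v : Fin d → ℕ) (ρ : List (VTrans d Q)) :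
    ∀ i (j : Fin d), zrun (ofNatVec v) ρ i j ≤ (mrun v ρ i j : ℤ) := by
  intro i
  induction i with
  | zero => intro j; simp [ofNatVec]
  | succ i ih =>
    intro j
    by_cases h : i < ρ.length
    · rw [zrun_succ _ _ h, mrun_cast _ _ h]
      have := ih j
      simp only [Pi.add_apply]
      calc zrun (ofNatVec v) ρ i j + (ρ.get ⟨i, h⟩).2.1 j
          ≤ (mrun v ρ i j : ℤ) + (ρ.get ⟨i, h⟩).2.1 j := by linarith
        _ ≤ max ((mrun v ρ i j : ℤ) + (ρ.get ⟨i, h⟩).2.1 j) 0 := le_max_left _ _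
    · push_neg at h
      rw [zrun_of_length_le _ _ (by omega), mrun_of_length_le _ _ (by omega),
        ← zrun_of_length_le (ofNatVec v) ρ h, ← mrun_of_length_le v ρ h]
      exact ih j

lemma diff_mono (v : Fin d → ℕ) (ρ : List (VTrans d Q)) {i i' : ℕ} (h : i ≤ i') (j : Fin d) :
    (mrun v ρ i j : ℤ) - zrun (ofNatVec v) ρ i j ≤
      (mrun v ρ i' j : ℤ) - zrun (ofNatVec v) ρ i' j := by
  induction i', h using Nat.le_induction with
  | base => exact le_refl _
  | succ i' hii' ih =>
    by_cases h' : i' < ρ.length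
    · rw [zrun_succ _ _ h', mrun_cast _ _ h']
      simp only [Pi.add_apply]
      have := le_max_left ((mrun v ρ i' j : ℤ) + (ρ.get ⟨i', h'⟩).2.1 j) 0
      linarith
    · push_neg at h'
      rw [zrun_of_length_le _ _ (show ρ.length ≤ i' + 1 by omega),
        mrun_of_length_le _ _ (show ρ.length ≤ i' + 1 by omega),
        ← zrun_of_length_le (ofNatVec v) ρ h', ← mrun_of_length_le v ρ h']
      exact ih

end Aux2

section Aux3

variable {d : ℕ} {Q : Type*}

/-- If the classical run from the larger `v'` stays nonnegative, the monus run from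
`v ≤ v'` stays below it. -/
lemma mrun_le_zrun (v v' : Fin d → ℕ) (ρ : List (VTrans d Q)) (hv : ∀ j, v j ≤ v' j)
    (hok : ClassicalOK v' ρ) :
    ∀ i ≤ ρ.length, ∀ j, (mrun v ρ i j : ℤ) ≤ zrun (ofNatVec v') ρ i j := by
  intro i
  induction i with
  | zero => intro _ j; simpa [ofNatVec] using hv j
  | succ i ih =>
    intro hi j
    have h : i < ρ.length := by omega
    rw [mrun_cast _ _ h, zrun_succ _ _ h]
    have h1 := ih (by omega) j
    have h2 := hok (i+1) hi j
    rw [zrun_succ _ _ h] at h2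
    simp only [Pi.add_apply] at h2 ⊢
    refine max_le (by linarith) (by linarith)

lemma mrun_eq_of_ok (v : Fin d → ℕ) (ρ : List (VTrans d Q)) (hok : ClassicalOK v ρ) :
    ∀ i ≤ ρ.length, ∀ j, (mrun v ρ i j : ℤ) = zrun (ofNatVec v) ρ i j := by
  intro i
  induction i with
  | zero => intro _ j; simp [ofNatVec]
  | succ i ih =>
    intro hi j
    have h : i < ρ.length := by omega
    rw [mrun_cast _ _ h, zrun_succ _ _ h]
    have h2 := hok (i+1) hi j
    rw [zrun_succ _ _ h] at h2
    simp only [Pi.add_apply] at h2 ⊢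
    rw [ih (by omega) j, max_eq_left h2]

lemma mrun_eq_of_not_lossy (v : Fin d → ℕ) (ρ : List (VTrans d Q)) (hL : ¬ Lossy v ρ) :
    ∀ i ≤ ρ.length, ∀ j, (mrun v ρ i j : ℤ) = zrun (ofNatVec v) ρ i j := by
  simp only [Lossy, not_exists, not_not] at hL
  intro i
  induction i with
  | zero => intro _ j; simp [ofNatVec]
  | succ i ih =>
    intro hi j
    have h : i < ρ.length := by omega
    have := hL ⟨i, h⟩ j
    simp only [not_not] at this
    rw [zrun_succ _ _ h, this]
    simp only [Pi.add_apply]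
    rw [ih (by omega) j]

end Aux3

section Aux4

variable {d : ℕ} {Q : Type*}

lemma endState_concat (s : Q) (l : List (VTrans d Q)) (b : VTrans d Q) :
    endState s (l ++ [b]) = b.2.2 := by
  unfold endState
  rw [List.map_append]
  exact List.getLastD_concat

lemma fromState_append {s : Q} {ρ₁ ρ₂ : List (VTrans d Q)} (h₁ : FromState s ρ₁)
    (h₂ : FromState (endState s ρ₁) ρ₂) : FromState s (ρ₁ ++ ρ₂) := by
  cases ρ₁ with
  | nil => simpa [endState] using h₂
  | cons t l => exact h₁

lemma pathIn_append {V : VASS d Q} {ρ₁ ρ₂ : List (VTrans d Q)} (s : Q) (h₁ : PathIn V ρ₁)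
    (h₂ : PathIn V ρ₂) (hf₂ : FromState (endState s ρ₁) ρ₂) : PathIn V (ρ₁ ++ ρ₂) := by
  refine ⟨List.isChain_append.mpr ⟨h₁.1, h₂.1, ?_⟩, ?_⟩
  · intro x hx y hy
    rcases List.eq_nil_or_concat ρ₁ with rfl | ⟨l, b, rfl⟩
    · simp at hx
    · rw [List.concat_eq_append] at hf₂
      rw [List.concat_eq_append, List.getLast?_concat] at hx
      cases ρ₂ with
      | nil => simp at hy
      | cons c l₂ =>
        simp only [List.head?_cons, Option.mem_some_iff] at hy
        have hx' : b = x := Option.mem_some_iff.mp hx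
        subst hy
        rw [← hx']
        have hc : c.1 = endState s (l ++ [b]) := hf₂
        rw [hc, endState_concat]
  · intro tr htr
    rcases List.mem_append.mp htr with h | h
    · exact h₁.2 tr h
    · exact h₂.2 tr h

lemma fromState_take (s : Q) {ρ : List (VTrans d Q)} (k : ℕ) (h : FromState s ρ) :
    FromState s (ρ.take k) := by
  cases ρ with
  | nil => simp [FromState]
  | cons t l =>
    cases k with
    | zero => trivial
    | succ k => exact h

lemma endState_take_succ (s : Q) {ρ : List (VTrans d Q)} {i : ℕ} (h : i < ρ.length) :
    endState s (ρ.take (i+1)) = (ρ.get ⟨i, h⟩).2.2 := by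
  rw [List.take_succ, List.getElem?_eq_getElem h, Option.toList_some]
  exact endState_concat _ _ _

lemma get_fst_eq_endState_take (s : Q) {ρ : List (VTrans d Q)} (hp : IsPath ρ)
    (hf : FromState s ρ) {k : ℕ} (h : k < ρ.length) :
    (ρ.get ⟨k, h⟩).1 = endState s (ρ.take k) := by
  cases k with
  | zero =>
    cases ρ with
    | nil => simp at h
    | cons t l => simpa [endState, FromState] using hf
  | succ i =>
    have hi : i < ρ.length := by omega
    rw [endState_take_succ s hi]
    exact (List.isChain_iff_getElem.mp hp i (by omega)).symm

lemma pathIn_take {V : VASS d Q} {ρ : List (VTrans d Q)} (h : PathIn V ρ) (k : ℕ) :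
    PathIn V (ρ.take k) := by
  have h' : PathIn V (ρ.take k ++ ρ.drop k) := by rw [List.take_append_drop]; exact h
  exact ⟨(List.isChain_append.mp h'.1).1, fun t ht => h'.2 t (List.mem_append_left _ ht)⟩

lemma pathIn_drop {V : VASS d Q} {ρ : List (VTrans d Q)} (h : PathIn V ρ) (k : ℕ) :
    PathIn V (ρ.drop k) := by
  have h' : PathIn V (ρ.take k ++ ρ.drop k) := by rw [List.take_append_drop]; exact h
  exact ⟨(List.isChain_append.mp h'.1).2.1, fun t ht => h'.2 t (List.mem_append_right _ ht)⟩

end Aux4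

section Aux5

variable {d : ℕ} {Q : Type*}

lemma classicalReach_trans {V : VASS d Q} {s q t : Q} {v u w : Fin d → ℕ}
    (h1 : ClassicalReach V s v q u) (h2 : ClassicalReach V q u t w) :
    ClassicalReach V s v t w := by
  obtain ⟨ρ₁, hp₁, hf₁, he₁, hok₁, hz₁⟩ := h1
  obtain ⟨ρ₂, hp₂, hf₂, he₂, hok₂, hz₂⟩ := h2
  refine ⟨ρ₁ ++ ρ₂, pathIn_append s hp₁ hp₂ (he₁ ▸ hf₂), fromState_append hf₁ (he₁ ▸ hf₂),
    ?_, ?_, ?_⟩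
  · rw [endState_append, he₁, he₂]
  · intro i hi j
    rcases le_or_gt i ρ₁.length with h | h
    · rw [zrun_append_le _ _ _ h]
      exact hok₁ i h j
    · obtain ⟨i', rfl⟩ : ∃ i', i = ρ₁.length + i' := ⟨i - ρ₁.length, by omega⟩
      rw [zrun_append_add, hz₁]
      rw [List.length_append] at hi
      exact hok₂ i' (by omega) j
  · show zrun _ _ (ρ₁ ++ ρ₂).length = _
    rw [List.length_append, zrun_append_add, hz₁]
    exact hz₂

lemma monusReach_trans {V : VASS d Q} {s q t : Q} {v u w : Fin d → ℕ}
    (h1 : MonusReach V s v q u) (h2 : MonusReach V q u t w) :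
    MonusReach V s v t w := by
  obtain ⟨ρ₁, hp₁, hf₁, he₁, hm₁⟩ := h1
  obtain ⟨ρ₂, hp₂, hf₂, he₂, hm₂⟩ := h2
  refine ⟨ρ₁ ++ ρ₂, pathIn_append s hp₁ hp₂ (he₁ ▸ hf₂), fromState_append hf₁ (he₁ ▸ hf₂),
    ?_, ?_⟩
  · rw [endState_append, he₁, he₂]
  · show mrun _ _ (ρ₁ ++ ρ₂).length = _
    rw [List.length_append, mrun_append_add, hm₁]
    exact hm₂

lemma classicalReach_toMonus {V : VASS d Q} {s t : Q} {v w : Fin d → ℕ}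
    (h : ClassicalReach V s v t w) : MonusReach V s v t w := by
  obtain ⟨ρ, hp, hf, he, hok, hz⟩ := h
  refine ⟨ρ, hp, hf, he, ?_⟩
  funext j
  have := mrun_eq_of_ok v ρ hok ρ.length le_rfl j
  have hzj : zend (ofNatVec v) ρ j = (w j : ℤ) := by rw [hz]; rfl
  have : (mend v ρ j : ℤ) = (w j : ℤ) := by rw [mend, this]; exact hzj
  exact_mod_cast this

/-- A classical run from `v'` to `0`, started instead from a smaller `v` under
monus semantics, still ends in `0`. -/
lemma monus_to_zero {V : VASS d Q} {s q : Q} {v v' : Fin d → ℕ} (hv : ∀ j, v j ≤ v' j)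
    (h : ClassicalReach V s v' q 0) : MonusReach V s v q 0 := by
  obtain ⟨ρ, hp, hf, he, hok, hz⟩ := h
  refine ⟨ρ, hp, hf, he, ?_⟩
  funext j
  have h1 := mrun_le_zrun v v' ρ hv hok ρ.length le_rfl j
  have h2 : zend (ofNatVec v') ρ j = 0 := by rw [hz]; simp [ofNatVec]
  rw [show zrun (ofNatVec v') ρ ρ.length j = 0 from h2] at h1
  have : mend v ρ j = 0 := by
    have := (Int.ofNat_le.mp (by exact_mod_cast h1 : ((mend v ρ j : ℤ)) ≤ ((0:ℕ) : ℤ)))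
    omega
  simpa using this

end Aux5
/-- (Characterization of monus reachability in 1-VASS.)
`s(m) ⇝* t(n)` iff (i) `s(m) →* t(n)`, or (ii) there exist a state `q` and `m' ≥ m`
with `s(m') →* q(0)` and `q(0) →* t(n)` (classical semantics). -/
theorem stmt14 {Q : Type*} (V : VASS 1 Q) (s t : Q) (m n : ℕ) :
    MonusReach V s (fun _ => m) t (fun _ => n) ↔
    (ClassicalReach V s (fun _ => m) t (fun _ => n) ∨
     ∃ (q : Q) (m' : ℕ), m ≤ m' ∧
       ClassicalReach V s (fun _ => m') q 0 ∧
       ClassicalReach V q 0 t (fun _ => n)) := by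
  classical
  constructor
  · rintro ⟨ρ, hp, hf, he, hm⟩
    by_cases hL : Lossy (fun _ => m) ρ
    · right
      set v : Fin 1 → ℕ := fun _ => m with hv
      obtain ⟨i₁, j₁, hlossy⟩ := hL
      have hj : ∀ j : Fin 1, j = 0 := fun j => Subsingleton.elim j 0
      set P : ℕ → Prop := fun i => ∃ h : i < ρ.length,
        (mrun v ρ (i+1) 0 : ℤ) ≠ (mrun v ρ i 0 : ℤ) + (ρ.get ⟨i, h⟩).2.1 0 with hPdef
      have hP₁ : P i₁ := ⟨i₁.2, by rw [hj j₁] at hlossy; exact hlossy⟩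
      set S := (Finset.range ρ.length).filter P with hS
      have hne : S.Nonempty := ⟨i₁, Finset.mem_filter.mpr ⟨Finset.mem_range.mpr i₁.2, hP₁⟩⟩
      set i₀ := S.max' hne with hi₀def
      have hi₀P : P i₀ := (Finset.mem_filter.mp (S.max'_mem hne)).2
      have hmax : ∀ i, P i → i ≤ i₀ := fun i hi =>
        S.le_max' i (Finset.mem_filter.mpr ⟨Finset.mem_range.mpr hi.1, hi⟩)
      obtain ⟨hlt, hne0⟩ := hi₀P
      set k := i₀ + 1 with hk
      have hkle : k ≤ ρ.length := hlt
      -- (a) the monus run is 0 right after the last lossy step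
      have hneg : (mrun v ρ i₀ 0 : ℤ) + (ρ.get ⟨i₀, hlt⟩).2.1 0 < 0 := by
        by_contra hge
        push_neg at hge
        exact hne0 (by rw [mrun_cast v ρ hlt 0, max_eq_left hge])
      have hk0 : ∀ j, mrun v ρ k j = 0 := by
        intro j; rw [hj j]
        have h1 : (mrun v ρ k 0 : ℤ) = 0 := by
          rw [mrun_cast v ρ hlt 0, max_eq_right (le_of_lt hneg)]
        exact_mod_cast h1
      -- (b) the ℤ-run value right after the last lossy step is a strict minimum
      set Z := zrun (ofNatVec v) ρ k 0 with hZdef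
      have hZeq : Z = zrun (ofNatVec v) ρ i₀ 0 + (ρ.get ⟨i₀, hlt⟩).2.1 0 := by
        rw [hZdef, hk, zrun_succ _ _ hlt]; rfl
      have hZlt : ∀ i ≤ i₀, Z < zrun (ofNatVec v) ρ i 0 := by
        intro i hi
        have hT := diff_mono v ρ hi (0 : Fin 1)
        have hmnn : (0:ℤ) ≤ (mrun v ρ i 0 : ℤ) := Int.ofNat_nonneg _
        linarith
      have hZ0 : Z < 0 := by
        have hT := diff_mono v ρ (Nat.zero_le i₀) (0 : Fin 1)
        have h00 : (mrun v ρ 0 0 : ℤ) - zrun (ofNatVec v) ρ 0 0 = 0 := by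
          simp [ofNatVec]
        linarith
      -- (c) no loss after the last lossy step
      have hnotrunc : ∀ i, k ≤ i → ∀ (h : i < ρ.length) (j : Fin 1),
          (mrun v ρ (i+1) j : ℤ) = (mrun v ρ i j : ℤ) + (ρ.get ⟨i, h⟩).2.1 j := by
        intro i hki h j
        rw [hj j]
        by_contra hcon
        exact absurd (hmax i ⟨h, hcon⟩) (by omega)
      -- the split point
      set ρ₁ := ρ.take k with hρ₁
      set ρ₂ := ρ.drop k with hρ₂
      have len₁ : ρ₁.length = k := by rw [hρ₁, List.length_take]; omega
      have len₂ : ρ₂.length = ρ.length - k := by rw [hρ₂, List.length_drop]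
      set q := endState s ρ₁ with hq
      set m' := m + (-Z).toNat with hm'
      have hm'cast : (m' : ℤ) = (m : ℤ) - Z := by
        rw [hm']
        push_cast
        rw [Int.toNat_of_nonneg (by omega)]
        ring
      refine ⟨q, m', Nat.le_add_right _ _, ?_, ?_⟩
      · -- s(m') →* q(0) along ρ₁
        have hshift : ofNatVec (fun _ => m') = ofNatVec v + (fun _ => -Z) := by
          funext j
          simp only [ofNatVec, Pi.add_apply, hv]
          rw [hm'cast]; ring
        have hzr : ∀ i ≤ k, ∀ j : Fin 1,
            zrun (ofNatVec (fun _ => m')) ρ₁ i j = zrun (ofNatVec v) ρ i j - Z := by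
          intro i hi j
          rw [hshift, zrun_add_const, Pi.add_apply, hρ₁, zrun_take _ _ hi]
          ring
        refine ⟨ρ₁, pathIn_take hp k, fromState_take s k hf, rfl, ?_, ?_⟩
        · intro i hi j
          rw [len₁] at hi
          rw [hzr i hi j, hj j]
          rcases Nat.lt_or_ge i k with h | h
          · have := hZlt i (by omega)
            linarith
          · have hik : i = k := by omega
            rw [hik]
            simp [hZdef]
        · funext j
          rw [zend, len₁, hzr k le_rfl j, hj j, ← hZdef, sub_self]
          simp [ofNatVec]
      · -- q(0) →* t(n) along ρ₂
        have hfrom₂ : FromState q ρ₂ := by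
          rcases Nat.lt_or_ge k ρ.length with hklt | hge
          · have hdrop := List.drop_eq_getElem_cons (l := ρ) hklt
            rw [hρ₂, hdrop]
            show (ρ[k]).1 = q
            rw [hq, hρ₁]
            exact get_fst_eq_endState_take s hp.1 hf hklt
          · rw [hρ₂, List.drop_eq_nil_of_le hge]
            trivial
        have hend₂ : endState q ρ₂ = t := by
          rw [← he]
          conv_rhs => rw [← List.take_append_drop k ρ]
          rw [endState_append]
        have hrun₂ : ∀ i ≤ ρ₂.length, ∀ j : Fin 1,
            zrun (ofNatVec 0) ρ₂ i j = (mrun v ρ (k+i) j : ℤ) := by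
          intro i
          induction i with
          | zero =>
            intro _ j
            simp [ofNatVec, hk0 j]
          | succ i ih =>
            intro hi j
            have hi' : i < ρ₂.length := by omega
            have hklt : k + i < ρ.length := by omega
            rw [zrun_succ _ _ hi']
            show _ = ((mrun v ρ ((k+i)+1) j : ℤ))
            rw [hnotrunc (k+i) (by omega) hklt j]
            simp only [Pi.add_apply]
            rw [ih (by omega) j]
            have hget : (ρ₂.get ⟨i, hi'⟩) = ρ.get ⟨k+i, hklt⟩ := by
              simp only [List.get_eq_getElem]
              exact List.getElem_drop
            rw [hget]
        refine ⟨ρ₂, pathIn_drop hp k, hfrom₂, hend₂, ?_, ?_⟩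
        · intro i hi j
          rw [hrun₂ i hi j]
          exact Int.ofNat_nonneg _
        · funext j
          rw [zend, hrun₂ ρ₂.length le_rfl j]
          have : k + ρ₂.length = ρ.length := by omega
          rw [this]
          have : mrun v ρ ρ.length j = n := by
            rw [show mrun v ρ ρ.length = mend v ρ from rfl, hm]
          rw [this]
          rfl
    · left
      refine ⟨ρ, hp, hf, he, ?_, ?_⟩
      · intro i hi j
        rw [← mrun_eq_of_not_lossy _ ρ hL i hi j]
        exact Int.ofNat_nonneg _
      · funext j
        rw [zend, ← mrun_eq_of_not_lossy _ ρ hL ρ.length le_rfl j,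
          show mrun (fun _ => m) ρ ρ.length = mend (fun _ => m) ρ from rfl, hm]
        rfl
  · rintro (h | ⟨q, m', hm', h1, h2⟩)
    · exact classicalReach_toMonus h
    · exact monusReach_trans (monus_to_zero (fun _ => hm') h1) (classicalReach_toMonus h2)
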